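/- Lower bound on the objective in case A: assume 0 < γ ≤ 1/β and β > 0. Then every feasible pair (x, y) of the simplified MUST-M problem satisfies ∑_v (x_v + γ·y_v) ≥ X̃ − (1/β − γ)·min(Y, Z/γ, β·X̃). -/

import Mathlib

open Finset

/-- Feasibility for the simplified MUST-M problem. -/
def Feasible {V : Type*} [Fintype V] (xt : V → ℝ) (β γ X' Y Z : ℝ)
    (x y : V → ℝ) : Prop :=
  (∀ v, 0 ≤ x v) ∧ (∀ v, 0 ≤ y v) ∧ (∀ v, xt v ≤ x v + (1 / β) * y v) ∧
  (∑ v, (x v + γ * y v)) ≤ X' ∧ (∑ v, y v) ≤ Y ∧ (∑ v, γ * y v) ≤ Z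

/-- Lower bound on the objective of the simplified MUST-M problem in
case A (`0 < γ ≤ 1/β`). -/
theorem mustm_caseA_lower_bound {V : Type*} [Fintype V]
    (xt : V → ℝ) (β γ X' Y Z : ℝ)
    (hxt : ∀ v, 0 ≤ xt v) (hβ : 0 < β) (hγ : 0 < γ) (hγβ : γ ≤ 1 / β)
    (hY : 0 ≤ Y) (hZ : 0 ≤ Z)
    (x y : V → ℝ) (hfeas : Feasible xt β γ X' Y Z x y) :
    (∑ v, xt v) - (1 / β - γ) * min Y (min (Z / γ) (β * ∑ v, xt v)) ≤
      ∑ v, (x v + γ * y v) := by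
  obtain ⟨hx0, hy0, hcov, hX', hYc, hZc⟩ := hfeas
  obtain ⟨c, hc⟩ : ∃ c : ℝ, c = 1 / β - γ := ⟨_, rfl⟩
  have hc0 : 0 ≤ c := by rw [hc, sub_nonneg]; exact hγβ
  obtain ⟨obj, hobj⟩ : ∃ o : ℝ, o = ∑ v, (x v + γ * y v) := ⟨_, rfl⟩
  rw [← hobj]
  -- bound 1: ∑xt - obj ≤ c * ∑ y
  have hb1 : (∑ v, xt v) - obj ≤ c * ∑ v, y v := by
    have h : (∑ v, xt v) ≤ ∑ v, (x v + γ * y v + c * y v) := by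
      apply Finset.sum_le_sum
      intro v _
      have heq : x v + (1 / β) * y v = x v + γ * y v + c * y v := by rw [hc]; ring
      nlinarith [hcov v, heq]
    rw [Finset.sum_add_distrib, ← Finset.mul_sum] at h
    linarith [hobj ▸ h]
  -- bound 2: ∑xt - obj ≤ c * β * ∑xt
  have hb2 : (∑ v, xt v) - obj ≤ c * (β * ∑ v, xt v) := by
    have h : (γ * β) * ∑ v, xt v ≤ obj := by
      rw [hobj, Finset.mul_sum]
      apply Finset.sum_le_sum
      intro v _
      have h1 : γ * β * xt v ≤ γ * β * (x v + (1 / β) * y v) := by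
        apply mul_le_mul_of_nonneg_left (hcov v) (by positivity)
      have h2 : γ * β * (x v + (1 / β) * y v) = γ * β * x v + γ * y v := by
        field_simp
      have h3 : γ * β * x v ≤ x v := by
        have hγβ1 : γ * β ≤ 1 := by
          have h4 : γ * β ≤ (1 / β) * β := mul_le_mul_of_nonneg_right hγβ hβ.le
          rwa [one_div, inv_mul_cancel₀ hβ.ne'] at h4
        nlinarith [hx0 v]
      linarith
    have hβγ1 : c * β = 1 - γ * β := by rw [hc]; field_simp
    have h4 : c * (β * ∑ v, xt v) = (1 - γ * β) * ∑ v, xt v := by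
      rw [← mul_assoc, hβγ1]
    linarith
  -- ∑y ≤ Y and ∑y ≤ Z/γ
  have hsy1 : (∑ v, y v) ≤ Y := hYc
  have hsy2 : (∑ v, y v) ≤ Z / γ := by
    rw [le_div_iff₀ hγ]
    calc (∑ v, y v) * γ = ∑ v, γ * y v := by rw [Finset.sum_mul]; congr 1; ext v; ring
      _ ≤ Z := hZc
  have key : (∑ v, xt v) - obj ≤ c * min Y (min (Z / γ) (β * ∑ v, xt v)) := by
    rcases le_total Y (min (Z / γ) (β * ∑ v, xt v)) with h | h
    · rw [min_eq_left h]
      calc (∑ v, xt v) - obj ≤ c * ∑ v, y v := hb1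
        _ ≤ c * Y := mul_le_mul_of_nonneg_left hsy1 hc0
    · rw [min_eq_right h]
      rcases le_total (Z / γ) (β * ∑ v, xt v) with h2 | h2
      · rw [min_eq_left h2]
        calc (∑ v, xt v) - obj ≤ c * ∑ v, y v := hb1
          _ ≤ c * (Z / γ) := mul_le_mul_of_nonneg_left hsy2 hc0
      · rw [min_eq_right h2]
        exact hb2
  rw [← hc]
  linarith
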